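/- Let 𝕄 = (M_1, …, M_k) be a tuple of matroids and 𝔹 = (B_1, …, B_k) a feasible basis sequence of 𝕄. Suppose W is a shortcut-free tadpole-walk in the exchangeability graph D(𝕄, 𝔹) and W' is a valid subgraph of W. Then 𝔹 △ W' := (B_1 △ (W' ∩ A_1), …, B_k △ (W' ∩ A_k)) is a feasible basis sequence of 𝕄, where for an arc set N ⊆ A_i that forms a matching, B_i △ N denotes the set obtained from B_i by removing the tails of arcs in N and adding their heads. -/

import Mathlib

universe u

/-- A matroid given by its finite ground set and its nonempty family of bases
satisfying the basis exchange axiom. -/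
structure FinMatroid (α : Type u) [DecidableEq α] where
  E : Finset α
  Bases : Finset α → Prop
  bases_subset_ground : ∀ B, Bases B → B ⊆ E
  bases_nonempty : ∃ B, Bases B
  basis_exchange : ∀ B B', Bases B → Bases B' → ∀ x ∈ B, x ∉ B' →
    ∃ y ∈ B', y ∉ B ∧ Bases (insert y (B.erase x))

variable {α : Type u} [DecidableEq α] {k : ℕ}

/-- A feasible basis sequence: each `B i` is a basis of `M i` and the bases are
pairwise disjoint. -/
def FeasibleSeq (M : Fin k → FinMatroid α) (B : Fin k → Finset α) : Prop :=
  (∀ i, (M i).Bases (B i)) ∧ ∀ i j, i ≠ j → Disjoint (B i) (B j)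

/-- Two feasible basis sequences are adjacent if they differ in exactly one
coordinate `i`, by a single exchange `B' i = (B i \ {x}) ∪ {y}` with `x ∈ B i`
and `y ∈ E i \ B i`. -/
def AdjacentSeq (M : Fin k → FinMatroid α) (B B' : Fin k → Finset α) : Prop :=
  ∃ i : Fin k, (∀ j, j ≠ i → B j = B' j) ∧
    ∃ x ∈ B i, ∃ y ∈ (M i).E, y ∉ B i ∧ B' i = insert y ((B i).erase x)

/-- A reconfiguration sequence of length `ℓ` from `B` to `B'`. -/
def ReconfigSeq (M : Fin k → FinMatroid α) (B B' : Fin k → Finset α) (ℓ : ℕ) : Prop :=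
  ∃ seq : ℕ → Fin k → Finset α, seq 0 = B ∧ seq ℓ = B' ∧
    (∀ t ≤ ℓ, FeasibleSeq M (seq t)) ∧
    ∀ t < ℓ, AdjacentSeq M (seq t) (seq (t + 1))

/-- `B` is reconfigurable to `B'`. -/
def Reconfigurable (M : Fin k → FinMatroid α) (B B' : Fin k → Finset α) : Prop :=
  ∃ ℓ : ℕ, ReconfigSeq M B B' ℓ

/-- The ground set `⋃ i, E i` of the matroid union. -/
def UnionGround (M : Fin k → FinMatroid α) : Finset α :=
  Finset.univ.biUnion fun i => (M i).E

/-- Sets of the form `B 1 ∪ ⋯ ∪ B k` with each `B i` a basis of `M i`. -/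
def IsUnionCandidate (M : Fin k → FinMatroid α) (U : Finset α) : Prop :=
  ∃ b : Fin k → Finset α, (∀ i, (M i).Bases (b i)) ∧ U = Finset.univ.biUnion b

/-- Bases of the matroid union `⋁ i, M i`: maximal sets among unions of bases. -/
def IsUnionBasis (M : Fin k → FinMatroid α) (U : Finset α) : Prop :=
  IsUnionCandidate M U ∧ ∀ V, IsUnionCandidate M V → U ⊆ V → U = V

/-- A coloop of the matroid union: an element of every basis of `⋁ i, M i`. -/
def IsUnionColoop (M : Fin k → FinMatroid α) (x : α) : Prop :=
  ∀ U, IsUnionBasis M U → x ∈ U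

/-- The arc set `A i` of the exchangeability graph `D(M i, B i)`:
`(x, y)` with `x ∈ B i`, `y ∈ E i \ B i` and `(B i \ {x}) ∪ {y}` a basis. -/
def ArcOf (M : Fin k → FinMatroid α) (B : Fin k → Finset α) (i : Fin k) (a : α × α) : Prop :=
  a.1 ∈ B i ∧ a.2 ∈ (M i).E ∧ a.2 ∉ B i ∧ (M i).Bases (insert a.2 ((B i).erase a.1))

/-- Arcs of the exchangeability graph `D(𝕄, 𝔹)`. -/
def ArcD (M : Fin k → FinMatroid α) (B : Fin k → Finset α) (a : α × α) : Prop :=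
  ∃ i, ArcOf M B i a

/-- A vertex of `D(𝕄, 𝔹)` lying in `E \ ⋃ i, B i`. -/
def FreeVertex (M : Fin k → FinMatroid α) (B : Fin k → Finset α) (v : α) : Prop :=
  v ∈ UnionGround M ∧ ∀ i, v ∉ B i

/-- A tadpole-walk `(x 0, …, x m = x 0, …, x n)` in `D(𝕄, 𝔹)`: the first part
(up to `m`) is a (possibly empty) directed cycle, the rest is a directed path,
the vertices are distinct except `x 0 = x m`, and `x n ∈ E \ ⋃ i, B i`. -/
structure TadpoleWalk (M : Fin k → FinMatroid α) (B : Fin k → Finset α) where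
  n : ℕ
  m : ℕ
  x : ℕ → α
  m_lt_n : m < n
  closed : x m = x 0
  arc : ∀ t < n, ArcD M B (x t, x (t + 1))
  distinct : ∀ s t, s < t → t ≤ n → x s = x t → s = 0 ∧ t = m
  last_free : FreeVertex M B (x n)

/-- The order `≺` on the vertices of a tadpole-walk with cycle length `m`,
expressed on positions: the vertex at position `p` precedes the vertex at
position `q` iff `x q` is not the smallest vertex `x 0 = x m` and either `x p`
is the smallest vertex or `p < q`. -/
def TadpolePrec (m p q : ℕ) : Prop :=
  ¬(q = 0 ∨ q = m) ∧ ((p = 0 ∨ p = m) ∨ p < q)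

/-- A tadpole-walk is shortcut-free if for any two of its arcs `a, a'` lying in
the same `A i` with `tail a ≺ tail a'`, the pair `(tail a, head a')` is not an
arc of `A i`. -/
def ShortcutFree {M : Fin k → FinMatroid α} {B : Fin k → Finset α}
    (W : TadpoleWalk M B) : Prop :=
  ∀ i : Fin k, ∀ p < W.n, ∀ q < W.n,
    ArcOf M B i (W.x p, W.x (p + 1)) → ArcOf M B i (W.x q, W.x (q + 1)) →
      TadpolePrec W.m p q → ¬ ArcOf M B i (W.x p, W.x (q + 1))

/-- The set of arcs of a tadpole-walk. -/
def ArcsOfWalk {M : Fin k → FinMatroid α} {B : Fin k → Finset α}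
    (W : TadpoleWalk M B) : Set (α × α) :=
  {a | ∃ t, t < W.n ∧ a = (W.x t, W.x (t + 1))}

/-- The consecutive arcs of a directed path given by its list of vertices. -/
def pathArcs {β : Type u} (P : List β) : List (β × β) := P.zip P.tail

/-- The arcs of a directed cycle given by its list of vertices (including the
closing arc back to the first vertex). -/
def cycleArcs {β : Type u} : List β → List (β × β)
  | [] => []
  | v :: rest => (v :: rest).zip (rest ++ [v])

/-- A valid subgraph of `D(𝕄, 𝔹)`, given by its arc set `S`: the disjoint
union of a (possibly empty) directed path ending at a vertex of
`E \ ⋃ i, B i` and a (possibly empty) directed cycle. -/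
def IsValidArcSet (M : Fin k → FinMatroid α) (B : Fin k → Finset α)
    (S : Finset (α × α)) : Prop :=
  ∃ P C : List α,
    P.Nodup ∧ C.Nodup ∧ (∀ v ∈ P, v ∉ C) ∧
    (∀ a ∈ pathArcs P, ArcD M B a) ∧
    (∀ a ∈ cycleArcs C, ArcD M B a) ∧
    (∀ v, P.getLast? = some v → FreeVertex M B v) ∧
    S = (pathArcs P ++ cycleArcs C).toFinset

open Classical in
/-- `B i △ (S ∩ A i)`: remove from `B i` the tails of the arcs of `S` lying in
`A i` and add their heads. -/
noncomputable def applyArcs (M : Fin k → FinMatroid α) (B : Fin k → Finset α)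
    (S : Finset (α × α)) (i : Fin k) : Finset α :=
  (B i \ (S.filter fun a => ArcOf M B i a).image Prod.fst) ∪
    (S.filter fun a => ArcOf M B i a).image Prod.snd

/-- `M` is the partition matroid with blocks `P j` and ranks `r j`. -/
def IsPartitionStructure (M : FinMatroid α) {t : ℕ} (P : Fin t → Finset α)
    (r : Fin t → ℕ) : Prop :=
  (∀ j j', j ≠ j' → Disjoint (P j) (P j')) ∧
  Finset.univ.biUnion P = M.E ∧
  (∀ j, r j ≤ (P j).card) ∧
  ∀ B : Finset α, M.Bases B ↔ B ⊆ M.E ∧ ∀ j, (B ∩ P j).card = r j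


section AuxMatroidTheory

namespace FinMatroid

variable {α : Type u} [DecidableEq α] (M : FinMatroid α)

/-- Bases are incomparable. -/
lemma base_eq_of_subset {B B' : Finset α} (hB : M.Bases B) (hB' : M.Bases B')
    (h : B' ⊆ B) : B' = B := by
  by_contra hne
  obtain ⟨x, hxB, hxB'⟩ : ∃ x ∈ B, x ∉ B' := by
    by_contra h'
    push_neg at h'
    exact hne (Finset.Subset.antisymm h h')
  obtain ⟨y, hyB', hyB, -⟩ := M.basis_exchange B B' hB hB' x hxB hxB'
  exact hyB (h hyB')

lemma base_card_eq {B B' : Finset α} (hB : M.Bases B) (hB' : M.Bases B') :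
    B.card = B'.card := by
  -- induction on (B \ B').card
  generalize hd : (B \ B').card = d
  induction d generalizing B with
  | zero =>
    have : B ⊆ B' := by
      intro x hx
      by_contra hx'
      have : x ∈ B \ B' := Finset.mem_sdiff.2 ⟨hx, hx'⟩
      simp [Finset.card_eq_zero.1 hd] at this
    rw [M.base_eq_of_subset hB' hB this]
  | succ d ih =>
    have hne : (B \ B').Nonempty := by
      rw [← Finset.card_pos, hd]; omega
    obtain ⟨x, hx⟩ := hne
    rw [Finset.mem_sdiff] at hx
    obtain ⟨y, hyB', hyB, hB1⟩ := M.basis_exchange B B' hB hB' x hx.1 hx.2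
    have hcard : (insert y (B.erase x)).card = B.card := by
      rw [Finset.card_insert_of_notMem (fun h => hyB (Finset.mem_of_mem_erase h)),
        Finset.card_erase_of_mem hx.1]
      have : 0 < B.card := Finset.card_pos.2 ⟨x, hx.1⟩
      omega
    have hsd : (insert y (B.erase x)) \ B' = (B \ B').erase x := by
      ext z
      simp only [Finset.mem_sdiff, Finset.mem_insert, Finset.mem_erase]
      constructor
      · rintro ⟨(rfl | ⟨hzx, hzB⟩), hzB'⟩
        · exact absurd hyB' hzB'
        · exact ⟨hzx, hzB, hzB'⟩
      · rintro ⟨hzx, hzB, hzB'⟩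
        exact ⟨Or.inr ⟨hzx, hzB⟩, hzB'⟩
    have : ((insert y (B.erase x)) \ B').card = d := by
      rw [hsd, Finset.card_erase_of_mem (Finset.mem_sdiff.2 hx), hd]
      omega
    rw [← hcard]
    exact ih hB1 this

/-- Independence: a subset of some basis. -/
def Indep (I : Finset α) : Prop := ∃ B, M.Bases B ∧ I ⊆ B

lemma Indep.subset {M : FinMatroid α} {I J : Finset α} (hJ : M.Indep J) (h : I ⊆ J) :
    M.Indep I := by
  obtain ⟨B, hB, hJB⟩ := hJ; exact ⟨B, hB, h.trans hJB⟩

lemma indep_card_le {I B : Finset α} (hI : M.Indep I) (hB : M.Bases B) :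
    I.card ≤ B.card := by
  obtain ⟨B', hB', hIB'⟩ := hI
  calc I.card ≤ B'.card := Finset.card_le_card hIB'
  _ = B.card := M.base_card_eq hB' hB

lemma base_of_indep_card {I B : Finset α} (hI : M.Indep I) (hB : M.Bases B)
    (h : B.card ≤ I.card) : M.Bases I := by
  obtain ⟨B', hB', hIB'⟩ := hI
  have : I = B' := Finset.eq_of_subset_of_card_le hIB'
    (by rw [M.base_card_eq hB' hB]; exact h)
  rw [this]; exact hB'

/-- An independent set extends into (a basis inside `I ∪ B`). -/
lemma exists_base_between {I B : Finset α} (hI : M.Indep I) (hB : M.Bases B) :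
    ∃ B', M.Bases B' ∧ I ⊆ B' ∧ B' ⊆ I ∪ B := by
  obtain ⟨B0, hB0, hIB0⟩ := hI
  generalize hd : (B0 \ (I ∪ B)).card = d
  induction d generalizing B0 with
  | zero =>
    refine ⟨B0, hB0, hIB0, ?_⟩
    intro x hx
    by_contra hx'
    have : x ∈ B0 \ (I ∪ B) := Finset.mem_sdiff.2 ⟨hx, hx'⟩
    simp [Finset.card_eq_zero.1 hd] at this
  | succ d ih =>
    have hne : (B0 \ (I ∪ B)).Nonempty := by rw [← Finset.card_pos, hd]; omega
    obtain ⟨x, hx⟩ := hne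
    rw [Finset.mem_sdiff, Finset.mem_union] at hx
    push_neg at hx
    obtain ⟨hxB0, hxI, hxB⟩ := hx
    obtain ⟨y, hyB, hyB0, hB1⟩ := M.basis_exchange B0 B hB0 hB x hxB0 hxB
    have hsub : I ⊆ insert y (B0.erase x) := fun z hz =>
      Finset.mem_insert.2 (Or.inr (Finset.mem_erase.2 ⟨fun h => hxI (h ▸ hz), hIB0 hz⟩))
    have hsd : (insert y (B0.erase x)) \ (I ∪ B) = (B0 \ (I ∪ B)).erase x := by
      ext z
      simp only [Finset.mem_sdiff, Finset.mem_insert, Finset.mem_erase, Finset.mem_union]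
      constructor
      · rintro ⟨(rfl | ⟨hzx, hzB0⟩), hz⟩
        · exact absurd (Or.inr hyB) hz
        · exact ⟨hzx, hzB0, hz⟩
      · rintro ⟨hzx, hzB0, hz⟩
        exact ⟨Or.inr ⟨hzx, hzB0⟩, hz⟩
    have hd' : ((insert y (B0.erase x)) \ (I ∪ B)).card = d := by
      rw [hsd, Finset.card_erase_of_mem
        (Finset.mem_sdiff.2 ⟨hxB0, by simp [hxI, hxB]⟩), hd]
      omega
    exact ih _ hB1 hsub hd'

/-- Augmentation. -/
lemma indep_augment {I J : Finset α} (hI : M.Indep I) (hJ : M.Indep J)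
    (h : I.card < J.card) : ∃ e ∈ J, e ∉ I ∧ M.Indep (insert e I) := by
  obtain ⟨BJ, hBJ, hJBJ⟩ := hJ
  obtain ⟨B', hB', hIB', hB'sub⟩ := M.exists_base_between hI hBJ
  by_contra hcon
  push_neg at hcon
  have hJB'I : J ∩ B' ⊆ I := by
    intro e he
    rw [Finset.mem_inter] at he
    by_contra heI
    exact heI (by
      have := hcon e he.1
      by_contra h'
      exact (this h') ⟨B', hB', Finset.insert_subset he.2 hIB'⟩)
  -- B' \ I ⊆ BJ \ J
  have hsub2 : B' \ I ⊆ BJ \ J := by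
    intro z hz
    rw [Finset.mem_sdiff] at hz ⊢
    have hzBJ : z ∈ BJ := by
      rcases Finset.mem_union.1 (hB'sub hz.1) with h' | h'
      · exact absurd h' hz.2
      · exact h'
    refine ⟨hzBJ, fun hzJ => hz.2 (hJB'I (Finset.mem_inter.2 ⟨hzJ, hz.1⟩))⟩
  have h1 : B'.card ≤ I.card + (BJ.card - J.card) := by
    have : B'.card = I.card + (B' \ I).card := by
      have := Finset.card_sdiff_add_card_eq_card hIB'
      omega
    have h2 : (B' \ I).card ≤ (BJ \ J).card := Finset.card_le_card hsub2
    have h3 : (BJ \ J).card = BJ.card - J.card := Finset.card_sdiff_of_subset hJBJ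
    omega
  have h4 : B'.card = BJ.card := M.base_card_eq hB' hBJ
  have h5 : J.card ≤ BJ.card := Finset.card_le_card hJBJ
  omega


/-- A circuit: a minimal dependent set. -/
def Circuit (C : Finset α) : Prop :=
  ¬M.Indep C ∧ ∀ x ∈ C, M.Indep (C.erase x)

/-- Every dependent set contains a circuit. -/
lemma exists_circuit_subset {D : Finset α} (hD : ¬M.Indep D) :
    ∃ C ⊆ D, M.Circuit C := by
  generalize hd : D.card = d
  induction d using Nat.strong_induction_on generalizing D with
  | _ d ih =>
    by_cases hmin : ∀ x ∈ D, M.Indep (D.erase x)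
    · exact ⟨D, Finset.Subset.refl D, hD, hmin⟩
    · push_neg at hmin
      obtain ⟨x, hxD, hx⟩ := hmin
      obtain ⟨C, hC1, hC2⟩ := ih (D.erase x).card
        (by rw [← hd]; exact Finset.card_erase_lt_of_mem hxD) hx rfl
      exact ⟨C, hC1.trans (Finset.erase_subset x D), hC2⟩

/-- Circuit elimination. -/
lemma circuit_elimination {C₁ C₂ : Finset α} (h₁ : M.Circuit C₁) (h₂ : M.Circuit C₂)
    (hne : C₁ ≠ C₂) {e : α} (he₁ : e ∈ C₁) (he₂ : e ∈ C₂) :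
    ¬M.Indep ((C₁ ∪ C₂).erase e) := by
  classical
  intro hD
  obtain ⟨f, hf₂, hf₁⟩ : ∃ f ∈ C₂, f ∉ C₁ := by
    by_contra h'
    push_neg at h'
    refine hne ?_
    by_contra h''
    obtain ⟨g, hg₁, hg₂⟩ : ∃ g ∈ C₁, g ∉ C₂ := by
      by_contra h3; push_neg at h3
      exact h'' (Finset.Subset.antisymm h3 h')
    exact h₂.1 ((h₁.2 g hg₁).subset (fun z hz =>
      Finset.mem_erase.2 ⟨fun hzg => hg₂ (by rwa [hzg] at hz), h' z hz⟩))
  set 𝒮 := (C₁ ∪ C₂).powerset.filter (fun I => M.Indep I ∧ C₂.erase f ⊆ I) with h𝒮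
  have hne𝒮 : 𝒮.Nonempty := by
    refine ⟨C₂.erase f, ?_⟩
    rw [h𝒮, Finset.mem_filter, Finset.mem_powerset]
    exact ⟨(Finset.erase_subset f C₂).trans Finset.subset_union_right,
      h₂.2 f hf₂, Finset.Subset.refl _⟩
  obtain ⟨I, hI𝒮, hImax⟩ := 𝒮.exists_max_image Finset.card hne𝒮
  rw [h𝒮, Finset.mem_filter, Finset.mem_powerset] at hI𝒮
  obtain ⟨hIsub, hIindep, hIC₂⟩ := hI𝒮
  -- f ∉ I, else C₂ ⊆ I would be independent
  have hfI : f ∉ I := by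
    intro hfI
    refine h₂.1 (hIindep.subset (fun z hz => ?_))
    by_cases hzf : z = f
    · exact hzf ▸ hfI
    · exact hIC₂ (Finset.mem_erase.2 ⟨hzf, hz⟩)
  -- some g ∈ C₁ \ I
  obtain ⟨g, hg₁, hgI⟩ : ∃ g ∈ C₁, g ∉ I := by
    by_contra h'
    push_neg at h'
    exact h₁.1 (hIindep.subset h')
  have hgf : g ≠ f := fun h => hf₁ (h ▸ hg₁)
  -- I ⊆ (C₁ ∪ C₂) \ {f, g}, so |I| ≤ |C₁ ∪ C₂| - 2 < |(C₁∪C₂).erase e|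
  have hIsub' : I ⊆ ((C₁ ∪ C₂).erase f).erase g := fun z hz =>
    Finset.mem_erase.2 ⟨fun h => hgI (h ▸ hz),
      Finset.mem_erase.2 ⟨fun h => hfI (h ▸ hz), hIsub hz⟩⟩
  have hcard : I.card < ((C₁ ∪ C₂).erase e).card := by
    have h1 : I.card ≤ (((C₁ ∪ C₂).erase f).erase g).card := Finset.card_le_card hIsub'
    have hfU : f ∈ C₁ ∪ C₂ := Finset.mem_union_right _ hf₂
    have hgU : g ∈ (C₁ ∪ C₂).erase f := Finset.mem_erase.2 ⟨hgf, Finset.mem_union_left _ hg₁⟩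
    have h2 := Finset.card_erase_of_mem hgU
    have h3 := Finset.card_erase_of_mem hfU
    have h4 := Finset.card_erase_of_mem (Finset.mem_union_left C₂ he₁ : e ∈ C₁ ∪ C₂)
    have h5 : 0 < (C₁ ∪ C₂).card := Finset.card_pos.2 ⟨f, hfU⟩
    have h6 : 1 < (C₁ ∪ C₂).card := by
      have := Finset.one_lt_card.2 ⟨f, hfU, g, Finset.mem_of_mem_erase hgU, fun h => hgf h.symm⟩
      omega
    omega
  -- augment I from (C₁ ∪ C₂).erase e
  obtain ⟨z, hzD, hzI, hzind⟩ := M.indep_augment hIindep hD hcard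
  have hz𝒮 : insert z I ∈ 𝒮 := by
    rw [h𝒮, Finset.mem_filter, Finset.mem_powerset]
    refine ⟨Finset.insert_subset (Finset.mem_of_mem_erase hzD) hIsub, hzind,
      hIC₂.trans (Finset.subset_insert z I)⟩
  have := hImax _ hz𝒮
  rw [Finset.card_insert_of_notMem hzI] at this
  omega


/-- Fundamental circuit existence. -/
lemma exists_fund_circuit {B : Finset α} (hB : M.Bases B) {y : α} (hy : y ∉ B) :
    ∃ C, C ⊆ insert y B ∧ M.Circuit C ∧ y ∈ C := by
  have hdep : ¬M.Indep (insert y B) := by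
    intro hind
    have h1 := M.indep_card_le hind hB
    rw [Finset.card_insert_of_notMem hy] at h1
    omega
  obtain ⟨C, hC1, hC2⟩ := M.exists_circuit_subset hdep
  refine ⟨C, hC1, hC2, ?_⟩
  by_contra hyC
  refine hC2.1 (Indep.subset ⟨B, hB, Finset.Subset.refl B⟩ (fun z hz => ?_))
  rcases Finset.mem_insert.1 (hC1 hz) with rfl | h
  · exact absurd hz hyC
  · exact h

/-- Membership in a fundamental circuit gives an exchange. -/
lemma base_exchange_of_mem_fund {B C : Finset α} (hB : M.Bases B)
    {y : α} (hy : y ∉ B) (hC : M.Circuit C) (hCsub : C ⊆ insert y B) (hyC : y ∈ C)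
    {x : α} (hxC : x ∈ C) (hxy : x ≠ y) : M.Bases (insert y (B.erase x)) := by
  have hxB : x ∈ B := by
    rcases Finset.mem_insert.1 (hCsub hxC) with h | h
    · exact absurd h hxy
    · exact h
  have hyB' : y ∈ insert y (B.erase x) := Finset.mem_insert_self y _
  have hcard : (insert y (B.erase x)).card = B.card := by
    rw [Finset.card_insert_of_notMem (fun h => hy (Finset.mem_of_mem_erase h)),
      Finset.card_erase_of_mem hxB]
    have : 0 < B.card := Finset.card_pos.2 ⟨x, hxB⟩
    omega
  have hindep : M.Indep (insert y (B.erase x)) := by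
    by_contra hdep
    obtain ⟨C', hC'sub, hC'⟩ := M.exists_circuit_subset hdep
    have hyC' : y ∈ C' := by
      by_contra hyC'
      refine hC'.1 (Indep.subset ⟨B, hB, Finset.Subset.refl B⟩ (fun z hz => ?_))
      rcases Finset.mem_insert.1 (hC'sub hz) with rfl | h
      · exact absurd hz hyC'
      · exact Finset.mem_of_mem_erase h
    have hne : C ≠ C' := by
      intro h
      have : x ∈ C' := h ▸ hxC
      rcases Finset.mem_insert.1 (hC'sub this) with h' | h'
      · exact hxy h'
      · exact (Finset.mem_erase.1 h').1 rfl
    have helim := M.circuit_elimination hC hC' hne hyC hyC'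
    refine helim (Indep.subset ⟨B, hB, Finset.Subset.refl B⟩ (fun z hz => ?_))
    rw [Finset.mem_erase] at hz
    rcases Finset.mem_union.1 hz.2 with h | h
    · rcases Finset.mem_insert.1 (hCsub h) with h' | h'
      · exact absurd h' hz.1
      · exact h'
    · rcases Finset.mem_insert.1 (hC'sub h) with h' | h'
      · exact absurd h' hz.1
      · exact Finset.mem_of_mem_erase h'
  exact M.base_of_indep_card hindep hB (by omega)

/-- An exchange forces membership in the fundamental circuit. -/
lemma mem_fund_of_base_exchange {B C : Finset α}
    {y : α} (hC : M.Circuit C) (hCsub : C ⊆ insert y B)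
    {x : α} (hexch : M.Bases (insert y (B.erase x))) : x ∈ C := by
  by_contra hxC
  refine hC.1 (Indep.subset ⟨_, hexch, Finset.Subset.refl _⟩ (fun z hz => ?_))
  rcases Finset.mem_insert.1 (hCsub hz) with rfl | h
  · exact Finset.mem_insert_self z _
  · exact Finset.mem_insert_of_mem (Finset.mem_erase.2 ⟨fun h' => hxC (h' ▸ hz), h⟩)

open Classical in
/-- Triangular multi-exchange: if `N` is a set of exchange arcs for `B` with
distinct tails, distinct heads, and no "shortcut" arc from an earlier tail to
a later head, then `B △ N` is a basis. -/
lemma base_triangular_exchange {B : Finset α} (hB : M.Bases B)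
    (N : Finset (α × α)) (pos : α × α → ℕ)
    (harc : ∀ a ∈ N, a.1 ∈ B ∧ a.2 ∉ B ∧ M.Bases (insert a.2 (B.erase a.1)))
    (htinj : ∀ a ∈ N, ∀ b ∈ N, a.1 = b.1 → a = b)
    (hhinj : ∀ a ∈ N, ∀ b ∈ N, a.2 = b.2 → a = b)
    (hposinj : ∀ a ∈ N, ∀ b ∈ N, pos a = pos b → a = b)
    (hshort : ∀ a ∈ N, ∀ b ∈ N, pos a < pos b → ¬ M.Bases (insert b.2 (B.erase a.1))) :
    M.Bases ((B \ N.image Prod.fst) ∪ N.image Prod.snd) := by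
  set T := N.image Prod.fst with hT
  set H := N.image Prod.snd with hH
  -- Key claim ruling out circuits
  have key : ∀ n (C : Finset α), (N.filter (fun b => b.2 ∈ C)).card = n →
      M.Circuit C → C ⊆ B ∪ H →
      (∀ a ∈ N, a.1 ∈ C → ∀ b ∈ N, b.2 ∈ C → pos b < pos a) → False := by
    intro n
    induction n using Nat.strong_induction_on with
    | _ n ih =>
      intro C hn hC hCsub hInv
      rcases Nat.eq_zero_or_pos n with rfl | hpos
      · -- no heads in C, so C ⊆ B, independent: contradiction
        refine hC.1 (Indep.subset ⟨B, hB, Finset.Subset.refl B⟩ (fun z hz => ?_))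
        rcases Finset.mem_union.1 (hCsub hz) with h | h
        · exact h
        · obtain ⟨b, hbN, hb2⟩ := Finset.mem_image.1 h
          exact absurd (Finset.card_eq_zero.1 hn ▸ Finset.mem_filter.2 ⟨hbN, hb2 ▸ hz⟩)
            (by simp [Finset.card_eq_zero.1 hn])
      · -- pick the head in C with maximal pos
        have hne : (N.filter (fun b => b.2 ∈ C)).Nonempty := by
          rw [← Finset.card_pos, hn]; exact hpos
        obtain ⟨b₀, hb₀mem, hb₀max⟩ := (N.filter (fun b => b.2 ∈ C)).exists_max_image pos hne
        rw [Finset.mem_filter] at hb₀mem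
        obtain ⟨hb₀N, hb₀C⟩ := hb₀mem
        obtain ⟨ht₀B, hh₀B, hb₀base⟩ := harc b₀ hb₀N
        -- fundamental circuit of b₀.2
        obtain ⟨C₂, hC₂sub, hC₂, hyC₂⟩ := M.exists_fund_circuit hB hh₀B
        have ht₀C₂ : b₀.1 ∈ C₂ := M.mem_fund_of_base_exchange hC₂ hC₂sub hb₀base
        have ht₀C : b₀.1 ∉ C := fun h => lt_irrefl _ (hInv b₀ hb₀N h b₀ hb₀N hb₀C)
        have hCne : C ≠ C₂ := fun h => ht₀C (h ▸ ht₀C₂)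
        have helim := M.circuit_elimination hC hC₂ hCne hb₀C hyC₂
        obtain ⟨C', hC'sub, hC'⟩ := M.exists_circuit_subset helim
        -- properties of C'
        have hC'head : ∀ b ∈ N, b.2 ∈ C' → b.2 ∈ C ∧ b ≠ b₀ := by
          intro b hbN hb2
          have h1 := hC'sub hb2
          rw [Finset.mem_erase] at h1
          have hb2C : b.2 ∈ C := by
            rcases Finset.mem_union.1 h1.2 with h | h
            · exact h
            · rcases Finset.mem_insert.1 (hC₂sub h) with h' | h'
              · exact absurd h' h1.1
              · exact absurd h' (harc b hbN).2.1
          exact ⟨hb2C, fun h => h1.1 (h ▸ rfl)⟩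
        have hC'subBH : C' ⊆ B ∪ H := by
          intro z hz
          have h1 := hC'sub hz
          rw [Finset.mem_erase] at h1
          rcases Finset.mem_union.1 h1.2 with h | h
          · exact hCsub h
          · rcases Finset.mem_insert.1 (hC₂sub h) with h' | h'
            · exact absurd h' h1.1
            · exact Finset.mem_union_left _ h'
        have hInv' : ∀ a ∈ N, a.1 ∈ C' → ∀ b ∈ N, b.2 ∈ C' → pos b < pos a := by
          intro a haN ha1 b hbN hb2
          obtain ⟨hb2C, hbne⟩ := hC'head b hbN hb2
          have hblt : pos b < pos b₀ := by
            have hle := hb₀max b (Finset.mem_filter.2 ⟨hbN, hb2C⟩)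
            have : pos b ≠ pos b₀ := fun h => hbne (hposinj b hbN b₀ hb₀N h)
            omega
          have h1 := hC'sub ha1
          rw [Finset.mem_erase] at h1
          rcases Finset.mem_union.1 h1.2 with h | h
          · exact hblt.trans (hInv a haN h b₀ hb₀N hb₀C)
          · -- a.1 ∈ C₂ : gives an exchange arc (a.1, b₀.2), so pos b₀ ≤ pos a
            have haxy : a.1 ≠ b₀.2 := fun h' => (harc a haN).2.1.elim (by
              exact absurd ((harc a haN).1) (h' ▸ fun hh => hh₀B hh))
            have hexch := M.base_exchange_of_mem_fund hB hh₀B hC₂ hC₂sub hyC₂ h haxy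
            have : ¬ pos a < pos b₀ := fun hlt => hshort a haN b₀ hb₀N hlt hexch
            omega
        -- the filter strictly decreased
        have hsub : N.filter (fun b => b.2 ∈ C') ⊆ (N.filter (fun b => b.2 ∈ C)).erase b₀ := by
          intro b hb
          rw [Finset.mem_filter] at hb
          obtain ⟨h1, h2⟩ := hC'head b hb.1 hb.2
          exact Finset.mem_erase.2 ⟨h2, Finset.mem_filter.2 ⟨hb.1, h1⟩⟩
        have hlt : (N.filter (fun b => b.2 ∈ C')).card < n := by
          calc (N.filter (fun b => b.2 ∈ C')).card
              ≤ ((N.filter (fun b => b.2 ∈ C)).erase b₀).card := Finset.card_le_card hsub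
            _ < (N.filter (fun b => b.2 ∈ C)).card :=
                Finset.card_erase_lt_of_mem (Finset.mem_filter.2 ⟨hb₀N, hb₀C⟩)
            _ = n := hn
        exact ih _ hlt C' rfl hC' hC'subBH hInv'
  -- Now show B' = (B \ T) ∪ H is independent of full cardinality
  have hindep : M.Indep ((B \ T) ∪ H) := by
    by_contra hdep
    obtain ⟨C, hCsub, hC⟩ := M.exists_circuit_subset hdep
    refine key _ C rfl hC (hCsub.trans (Finset.union_subset_union Finset.sdiff_subset
      (Finset.Subset.refl H))) ?_
    intro a haN ha1 b hbN hb2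
    exfalso
    rcases Finset.mem_union.1 (hCsub ha1) with h | h
    · exact (Finset.mem_sdiff.1 h).2 (Finset.mem_image_of_mem Prod.fst haN)
    · obtain ⟨c, hcN, hc2⟩ := Finset.mem_image.1 h
      exact (harc c hcN).2.1 (hc2 ▸ (harc a haN).1)
  have hTB : T ⊆ B := by
    intro z hz
    obtain ⟨a, haN, ha⟩ := Finset.mem_image.1 hz
    exact ha ▸ (harc a haN).1
  have hcard : ((B \ T) ∪ H).card = B.card := by
    have hdisj : Disjoint (B \ T) H := by
      rw [Finset.disjoint_right]
      intro z hz
      obtain ⟨a, haN, ha⟩ := Finset.mem_image.1 hz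
      intro hzB
      exact (harc a haN).2.1 (ha ▸ (Finset.mem_sdiff.1 hzB).1)
    rw [Finset.card_union_of_disjoint hdisj, Finset.card_sdiff_of_subset hTB]
    have hTcard : T.card = N.card := Finset.card_image_of_injOn
      (fun a ha b hb h => htinj a ha b hb h)
    have hHcard : H.card = N.card := Finset.card_image_of_injOn
      (fun a ha b hb h => hhinj a ha b hb h)
    have : T.card ≤ B.card := Finset.card_le_card hTB
    omega
  exact M.base_of_indep_card hindep hB (by omega)

end FinMatroid


namespace WalkLists

variable {β : Type u}

lemma pathArcs_cons_cons (v w : β) (r : List β) :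
    pathArcs (v :: w :: r) = (v, w) :: pathArcs (w :: r) := rfl

lemma mem_pathArcs {P : List β} {a : β × β} (h : a ∈ pathArcs P) :
    a.1 ∈ P ∧ a.2 ∈ P.tail := by
  obtain ⟨a1, a2⟩ := a
  exact List.of_mem_zip h

lemma pathArcs_tail_inj {P : List β} (hnd : P.Nodup) :
    ∀ a ∈ pathArcs P, ∀ b ∈ pathArcs P, a.1 = b.1 → a = b := by
  induction P with
  | nil => intro a ha; simp [pathArcs] at ha
  | cons v rest ih =>
    cases rest with
    | nil => intro a ha; simp [pathArcs] at ha
    | cons w r =>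
      intro a ha b hb hab
      rw [pathArcs_cons_cons] at ha hb
      have hvnot : v ∉ w :: r := (List.nodup_cons.1 hnd).1
      rcases List.mem_cons.1 ha with rfl | ha' <;> rcases List.mem_cons.1 hb with rfl | hb'
      · rfl
      · exact absurd ((hab ▸ (mem_pathArcs hb').1 : (v, w).1 ∈ w :: r)) hvnot
      · exact absurd ((hab ▸ (mem_pathArcs ha').1 : a.1 ∈ w :: r)) (hab ▸ hvnot)
      · exact ih (List.nodup_cons.1 hnd).2 a ha' b hb' hab
  
lemma pathArcs_head_inj {P : List β} (hnd : P.Nodup) :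
    ∀ a ∈ pathArcs P, ∀ b ∈ pathArcs P, a.2 = b.2 → a = b := by
  induction P with
  | nil => intro a ha; simp [pathArcs] at ha
  | cons v rest ih =>
    cases rest with
    | nil => intro a ha; simp [pathArcs] at ha
    | cons w r =>
      intro a ha b hb hab
      rw [pathArcs_cons_cons] at ha hb
      have hwr : (w :: r).Nodup := (List.nodup_cons.1 hnd).2
      have hwnot : w ∉ r := (List.nodup_cons.1 hwr).1
      rcases List.mem_cons.1 ha with rfl | ha' <;> rcases List.mem_cons.1 hb with rfl | hb'
      · rfl
      · exact absurd ((hab ▸ (mem_pathArcs hb').2 : (v, w).2 ∈ (w :: r).tail)) hwnot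
      · exact absurd ((hab ▸ (mem_pathArcs ha').2 : a.2 ∈ (w :: r).tail)) (hab ▸ hwnot)
      · exact ih hwr a ha' b hb' hab

lemma pathArcs_last_or_next {P : List β} :
    ∀ a ∈ pathArcs P, P.getLast? = some a.2 ∨ ∃ b ∈ pathArcs P, b.1 = a.2 := by
  induction P with
  | nil => intro a ha; simp [pathArcs] at ha
  | cons v rest ih =>
    cases rest with
    | nil => intro a ha; simp [pathArcs] at ha
    | cons w r =>
      intro a ha
      rw [pathArcs_cons_cons] at ha
      rcases List.mem_cons.1 ha with rfl | ha'
      · cases r with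
        | nil => left; rfl
        | cons u r' =>
          right
          refine ⟨(w, u), ?_, rfl⟩
          rw [pathArcs_cons_cons]
          exact List.mem_cons_of_mem _ (by
            rw [pathArcs_cons_cons]; exact List.mem_cons_self)
      · rcases ih a ha' with h | ⟨b, hb, hba⟩
        · left
          rw [show (v :: w :: r).getLast? = (w :: r).getLast? from by
            cases r <;> simp [List.getLast?]]
          exact h
        · right; exact ⟨b, by rw [pathArcs_cons_cons]; exact List.mem_cons_of_mem _ hb, hba⟩

lemma mem_cycleArcs {C : List β} {a : β × β} (h : a ∈ cycleArcs C) :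
    a.1 ∈ C ∧ a.2 ∈ C := by
  cases C with
  | nil => simp [cycleArcs] at h
  | cons v rest =>
    obtain ⟨a1, a2⟩ := a
    have := List.of_mem_zip (h : (a1, a2) ∈ (v :: rest).zip (rest ++ [v]))
    refine ⟨this.1, ?_⟩
    rcases List.mem_append.1 this.2 with h' | h'
    · exact List.mem_cons_of_mem _ h'
    · rw [List.mem_singleton.1 h']; exact List.mem_cons_self

lemma map_fst_cycleArcs (C : List β) : (cycleArcs C).map Prod.fst = C := by
  cases C with
  | nil => rfl
  | cons v rest =>
    exact List.map_fst_zip (by simp)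

lemma map_snd_cycleArcs (v : β) (rest : List β) :
    (cycleArcs (v :: rest)).map Prod.snd = rest ++ [v] := by
  exact List.map_snd_zip (by simp)

lemma cycleArcs_tail_inj {C : List β} (hnd : C.Nodup) :
    ∀ a ∈ cycleArcs C, ∀ b ∈ cycleArcs C, a.1 = b.1 → a = b := by
  have h : ((cycleArcs C).map Prod.fst).Nodup := by rw [map_fst_cycleArcs]; exact hnd
  exact fun a ha b hb => List.inj_on_of_nodup_map h ha hb

lemma cycleArcs_head_inj {C : List β} (hnd : C.Nodup) :
    ∀ a ∈ cycleArcs C, ∀ b ∈ cycleArcs C, a.2 = b.2 → a = b := by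
  cases C with
  | nil => intro a ha; simp [cycleArcs] at ha
  | cons v rest =>
    have h : ((cycleArcs (v :: rest)).map Prod.snd).Nodup := by
      rw [map_snd_cycleArcs]
      exact ((List.perm_append_singleton v rest).nodup_iff).2 hnd
    exact fun a ha b hb => List.inj_on_of_nodup_map h ha hb

lemma cycleArcs_next {C : List β} :
    ∀ a ∈ cycleArcs C, ∃ b ∈ cycleArcs C, b.1 = a.2 := by
  intro a ha
  have h2 : a.2 ∈ (cycleArcs C).map Prod.fst := by
    rw [map_fst_cycleArcs]; exact (mem_cycleArcs ha).2
  obtain ⟨b, hb, hba⟩ := List.mem_map.1 h2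
  exact ⟨b, hb, hba⟩

end WalkLists

end AuxMatroidTheory

/-- **Theorem (statement 7).** If `W` is a shortcut-free tadpole-walk in
`D(𝕄, 𝔹)` and `S` is (the arc set of) a valid subgraph of `W`, then
`𝔹 △ S = (B 1 △ (S ∩ A 1), …, B k △ (S ∩ A k))` is a feasible basis
sequence of `𝕄`. -/
theorem feasible_of_valid_subgraph_of_shortcutFree {α : Type u} [DecidableEq α] {k : ℕ}
    (M : Fin k → FinMatroid α) (B : Fin k → Finset α) (hB : FeasibleSeq M B)
    (W : TadpoleWalk M B) (hW : ShortcutFree W)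
    (S : Finset (α × α)) (hsub : (S : Set (α × α)) ⊆ ArcsOfWalk W)
    (hvalid : IsValidArcSet M B S) :
    FeasibleSeq M (fun i => applyArcs M B S i) := by
  classical
  obtain ⟨P, C, hPnd, hCnd, hPC, hPA, hCA, hfreeP, hS⟩ := hvalid
  -- basic facts about arcs of S
  have hmemS : ∀ a ∈ S, a ∈ pathArcs P ∨ a ∈ cycleArcs C := by
    intro a ha
    rw [hS, List.mem_toFinset, List.mem_append] at ha
    exact ha
  have hmemS' : ∀ a : α × α, (a ∈ pathArcs P ∨ a ∈ cycleArcs C) → a ∈ S := by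
    intro a ha
    rw [hS, List.mem_toFinset, List.mem_append]
    exact ha
  have hSarc : ∀ a ∈ S, ArcD M B a := by
    intro a ha
    rcases hmemS a ha with h | h
    · exact hPA a h
    · exact hCA a h
  have htinj : ∀ a ∈ S, ∀ b ∈ S, a.1 = b.1 → a = b := by
    intro a ha b hb hab
    rcases hmemS a ha with h1 | h1 <;> rcases hmemS b hb with h2 | h2
    · exact WalkLists.pathArcs_tail_inj hPnd a h1 b h2 hab
    · exact absurd (hab ▸ (WalkLists.mem_cycleArcs h2).1)
        (hPC _ (WalkLists.mem_pathArcs h1).1)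
    · exact absurd ((WalkLists.mem_cycleArcs h1).1)
        (hab ▸ hPC _ (WalkLists.mem_pathArcs h2).1)
    · exact WalkLists.cycleArcs_tail_inj hCnd a h1 b h2 hab
  have hhinj : ∀ a ∈ S, ∀ b ∈ S, a.2 = b.2 → a = b := by
    intro a ha b hb hab
    rcases hmemS a ha with h1 | h1 <;> rcases hmemS b hb with h2 | h2
    · exact WalkLists.pathArcs_head_inj hPnd a h1 b h2 hab
    · exact absurd (hab ▸ (WalkLists.mem_cycleArcs h2).2)
        (hPC _ (List.mem_of_mem_tail (WalkLists.mem_pathArcs h1).2))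
    · exact absurd ((WalkLists.mem_cycleArcs h1).2)
        (hab ▸ hPC _ (List.mem_of_mem_tail (WalkLists.mem_pathArcs h2).2))
    · exact WalkLists.cycleArcs_head_inj hCnd a h1 b h2 hab
  have hfree_or_next : ∀ a ∈ S, FreeVertex M B a.2 ∨ ∃ b ∈ S, b.1 = a.2 := by
    intro a ha
    rcases hmemS a ha with h | h
    · rcases WalkLists.pathArcs_last_or_next a h with h' | ⟨b, hb, hba⟩
      · exact Or.inl (hfreeP _ h')
      · exact Or.inr ⟨b, hmemS' b (Or.inl hb), hba⟩
    · obtain ⟨b, hb, hba⟩ := WalkLists.cycleArcs_next a h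
      exact Or.inr ⟨b, hmemS' b (Or.inr hb), hba⟩
  -- position function along the walk
  have hexpos : ∀ a : α × α, ∃ t, a ∈ S → (t < W.n ∧ a = (W.x t, W.x (t + 1))) := by
    intro a
    by_cases ha : a ∈ S
    · obtain ⟨t, ht⟩ := hsub (Finset.mem_coe.2 ha)
      exact ⟨t, fun _ => ht⟩
    · exact ⟨0, fun h => absurd h ha⟩
  choose pos hposS using hexpos
  -- part 1: each transformed set is a basis
  have hbases : ∀ i, (M i).Bases (applyArcs M B S i) := by
    intro i
    have happ : applyArcs M B S i =
        ((B i) \ (S.filter fun a => ArcOf M B i a).image Prod.fst) ∪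
          (S.filter fun a => ArcOf M B i a).image Prod.snd := by
      simp [applyArcs]
    rw [happ]
    set N := S.filter fun a => ArcOf M B i a with hN
    have hNS : N ⊆ S := Finset.filter_subset _ _
    have hNarc : ∀ a ∈ N, ArcOf M B i a := fun a ha => (Finset.mem_filter.1 ha).2
    refine (M i).base_triangular_exchange (hB.1 i) N
      (fun a => if pos a = 0 ∨ pos a = W.m then 0 else pos a) ?_ ?_ ?_ ?_ ?_
    · exact fun a ha => ⟨(hNarc a ha).1, (hNarc a ha).2.2.1, (hNarc a ha).2.2.2⟩
    · exact fun a ha b hb => htinj a (hNS ha) b (hNS hb)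
    · exact fun a ha b hb => hhinj a (hNS ha) b (hNS hb)
    · -- injectivity of the adjusted position
      intro a ha b hb h
      obtain ⟨hpa, ha'⟩ := hposS a (hNS ha)
      obtain ⟨hpb, hb'⟩ := hposS b (hNS hb)
      split_ifs at h with hca hcb hcb
      · -- both tails equal x 0
        have hta : a.1 = W.x 0 := by
          rcases hca with h' | h''
          · rw [ha']; simp [h']
          · rw [ha']; simp [h'', W.closed]
        have htb : b.1 = W.x 0 := by
          rcases hcb with h' | h''
          · rw [hb']; simp [h']
          · rw [hb']; simp [h'', W.closed]
        exact htinj a (hNS ha) b (hNS hb) (hta.trans htb.symm)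
      · exact absurd (Or.inl h.symm) hcb
      · exact absurd (Or.inl h) hca
      · rw [ha', hb', h]
    · -- no shortcuts
      intro a ha b hb hlt hbase
      obtain ⟨hpa, ha'⟩ := hposS a (hNS ha)
      obtain ⟨hpb, hb'⟩ := hposS b (hNS hb)
      have hcb : ¬(pos b = 0 ∨ pos b = W.m) := by
        intro h'
        rw [if_pos h'] at hlt
        omega
      rw [if_neg hcb] at hlt
      have hprec : TadpolePrec W.m (pos a) (pos b) := by
        refine ⟨hcb, ?_⟩
        by_cases hca : pos a = 0 ∨ pos a = W.m
        · exact Or.inl hca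
        · rw [if_neg hca] at hlt
          exact Or.inr hlt
      have harcA : ArcOf M B i (W.x (pos a), W.x (pos a + 1)) := ha' ▸ hNarc a ha
      have harcB : ArcOf M B i (W.x (pos b), W.x (pos b + 1)) := hb' ▸ hNarc b hb
      refine hW i (pos a) hpa (pos b) hpb harcA harcB hprec ?_
      have hpair : (W.x (pos a), W.x (pos b + 1)) = (a.1, b.2) :=
        Prod.ext ((congrArg Prod.fst ha').symm) ((congrArg Prod.snd hb').symm)
      rw [hpair]
      exact ⟨(hNarc a ha).1, (hNarc b hb).2.1, (hNarc b hb).2.2.1, hbase⟩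
  -- part 2: disjointness
  refine ⟨hbases, ?_⟩
  intro i j hij
  have hmem : ∀ (i : Fin k) (v : α), v ∈ applyArcs M B S i →
      (v ∈ B i ∧ ∀ a ∈ S, ArcOf M B i a → a.1 ≠ v) ∨
        (∃ a ∈ S, ArcOf M B i a ∧ a.2 = v) := by
    intro i v hv
    rw [applyArcs, Finset.mem_union] at hv
    rcases hv with hv | hv
    · rw [Finset.mem_sdiff] at hv
      refine Or.inl ⟨hv.1, fun a haS haArc hav => hv.2 ?_⟩
      rw [Finset.mem_image]
      exact ⟨a, by rw [Finset.mem_filter]; exact ⟨haS, haArc⟩, hav⟩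
    · rw [Finset.mem_image] at hv
      obtain ⟨a, haN, hav⟩ := hv
      rw [Finset.mem_filter] at haN
      exact Or.inr ⟨a, haN.1, haN.2, hav⟩
  have hhead : ∀ (j : Fin k) (v : α), v ∈ B j →
      (∀ a ∈ S, ArcOf M B j a → a.1 ≠ v) →
      ∀ a ∈ S, ∀ i' : Fin k, ArcOf M B i' a → a.2 ≠ v := by
    intro j v hvB hnotail a ha i' harc hav
    rcases hfree_or_next a ha with hf | ⟨b, hbS, hb1⟩
    · exact (hf.2 j) (hav ▸ hvB)
    · obtain ⟨i'', harcb⟩ := hSarc b hbS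
      have hii : i'' = j := by
        by_contra hne
        exact (Finset.disjoint_left.1 (hB.2 i'' j hne)) harcb.1
          (by rw [hb1, hav]; exact hvB)
      exact hnotail b hbS (hii ▸ harcb) (by rw [hb1, hav])
  rw [Finset.disjoint_left]
  intro v hvi hvj
  simp only at hvi hvj
  rcases hmem i v hvi with ⟨hviB, hnti⟩ | ⟨a, haS, haArc, hav⟩ <;>
    rcases hmem j v hvj with ⟨hvjB, hntj⟩ | ⟨b, hbS, hbArc, hbv⟩
  · exact (Finset.disjoint_left.1 (hB.2 i j hij)) hviB hvjB
  · exact hhead i v hviB hnti b hbS j hbArc hbv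
  · exact hhead j v hvjB hntj a haS i haArc hav
  · have hab : a = b := hhinj a haS b hbS (hav.trans hbv.symm)
    exact (Finset.disjoint_left.1 (hB.2 i j hij)) haArc.1 (hab ▸ hbArc.1)
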